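/- arXiv:2006.02395 — 5 statements merged into one kernel-verified Lean document; each statement's English description precedes it below -/
import Mathlib

section
/- Let S be a finite subset of ℤ^n and let Δ, Δ' ⊆ S be two simplexes (subsets of cardinality n+1 not contained in an affine hyperplane) with equal barycenters b(Δ) = b(Δ'). Then b(Δ) is not a vertex (extreme point) of the barycentric polytope B(S), i.e., the convex hull of all barycenters of simplexes contained in S. -/
open Submodule Set

theorem affine_lift {K W : Type*} [Field K] [AddCommGroup W] [Module K W] {ι : Type*}
    (p : ι → W) :
    AffineIndependent K p ↔ LinearIndependent K (fun i => ((p i, 1) : W × K)) := by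
  rw [affineIndependent_iff, linearIndependent_iff']
  constructor
  · intro h s g hg
    have h1 : ∑ i ∈ s, g i • ((p i, 1) : W × K) = (∑ i ∈ s, g i • p i, ∑ i ∈ s, g i) := by
      rw [Prod.ext_iff]
      simp [Prod.fst_sum, Prod.snd_sum]
    rw [h1, Prod.ext_iff] at hg
    exact h s g (by simpa using hg.2) (by simpa using hg.1)
  · intro h s w hw hw'
    refine h s w ?_
    have h1 : ∑ i ∈ s, w i • ((p i, 1) : W × K) = (∑ i ∈ s, w i • p i, ∑ i ∈ s, w i) := by
      rw [Prod.ext_iff]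
      simp [Prod.fst_sum, Prod.snd_sum]
    rw [h1, hw, hw']
    rfl
open Submodule Set Module

theorem linearIndependent_insert {K V : Type*} [Field K] [AddCommGroup V] [Module K V]
    {s : Set V} {x : V} (hxs : x ∉ s) :
    (LinearIndependent K fun b : (insert x s : Set V) => (b : V)) ↔
      LinearIndependent K (fun b : s => (b : V)) ∧ x ∉ Submodule.span K s :=
  linearIndepOn_id_insert hxs

theorem linearIndependent_image {R M : Type*} [Ring R] [AddCommGroup M] [Module R M] {ι : Type*}
    {s : Set ι} {f : ι → M} (hf : Set.InjOn f s) :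
    (LinearIndependent R fun x : s => f x) ↔ LinearIndependent R fun x : f '' s => (x : M) :=
  linearIndepOn_iff_image hf

theorem exchange {K V : Type*} [Field K] [AddCommGroup V] [Module K V] [FiniteDimensional K V]
    [DecidableEq V]
    (A B : Finset V)
    (hA : LinearIndependent K (fun x : (A : Set V) => (x : V)))
    (hB : LinearIndependent K (fun x : (B : Set V) => (x : V)))
    (hcA : A.card = finrank K V) (hcB : B.card = finrank K V)
    {e : V} (heA : e ∈ A) (heB : e ∉ B) :
    ∃ f ∈ B, f ∉ A ∧
      LinearIndependent K (fun x : ((insert f (A.erase e) : Finset V) : Set V) => (x : V)) ∧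
      LinearIndependent K (fun x : ((insert e (B.erase f) : Finset V) : Set V) => (x : V)) := by
  have hBne : Nonempty (B : Set V) := by
    have h0 : 0 < A.card := Finset.card_pos.mpr ⟨e, heA⟩
    have : B.Nonempty := Finset.card_pos.mp (by omega)
    obtain ⟨x, hx⟩ := this
    exact ⟨⟨x, hx⟩⟩
  -- basis from B
  have hcard : Fintype.card (B : Set V) = finrank K V := by
    rw [← hcB]; simp
  let 𝒷 : Basis (B : Set V) K V := basisOfLinearIndependentOfCardEqFinrank hB hcard
  have h𝒷 : ∀ i : (B : Set V), 𝒷 i = (i : V) := by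
    intro i
    rw [coe_basisOfLinearIndependentOfCardEqFinrank]
  -- H := span of A.erase e
  set H : Submodule K V := span K ((A.erase e : Finset V) : Set V) with hH
  have hcoeA : (A : Set V) = insert e ((A.erase e : Finset V) : Set V) := by
    rw [← Finset.coe_insert, Finset.insert_erase heA]
  have heAe : e ∉ ((A.erase e : Finset V) : Set V) := by simp
  have hA' : LinearIndependent K (fun x : ((A.erase e : Finset V) : Set V) => (x : V)) ∧ e ∉ H := by
    rw [← linearIndependent_insert heAe, ← hcoeA]
    exact hA
  have heH : e ∉ H := hA'.2
  -- find f
  set c := 𝒷.repr e with hc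
  have key : ∃ i : (B : Set V), c i ≠ 0 ∧ (i : V) ∉ H := by
    by_contra h
    push_neg at h
    apply heH
    have : e = Finsupp.linearCombination K 𝒷 c := (𝒷.linearCombination_repr e).symm
    rw [this, Finsupp.linearCombination_apply, Finsupp.sum]
    refine Submodule.sum_mem _ (fun i hi => ?_)
    have hci : c i ≠ 0 := Finsupp.mem_support_iff.mp hi
    have := h i hci
    rw [h𝒷 i]
    exact Submodule.smul_mem _ _ this
  obtain ⟨i, hci, hiH⟩ := key
  refine ⟨(i : V), i.2, ?_, ?_, ?_⟩
  · intro hfA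
    apply hiH
    apply subset_span
    rw [Finset.coe_erase]
    refine ⟨hfA, ?_⟩
    intro h; apply heB; rw [← h]; exact i.2
  · -- insert f (A.erase e) linearly independent
    have hfAe : (i : V) ∉ ((A.erase e : Finset V) : Set V) := fun h => hiH (subset_span h)
    rw [Finset.coe_insert, linearIndependent_insert hfAe]
    exact ⟨hA'.1, hiH⟩
  · -- insert e (B.erase f) linearly independent
    have heBe : e ∉ ((B.erase (i : V) : Finset V) : Set V) := by
      simp only [Finset.coe_erase, Set.mem_diff]
      intro h; exact heB h.1
    rw [Finset.coe_insert, linearIndependent_insert heBe]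
    constructor
    · refine LinearIndepOn.mono (v := id) hB ?_
      rw [Finset.coe_erase]
      exact Set.diff_subset
    · -- e ∉ span of B.erase f
      intro hmem
      have himg : ((B.erase (i : V) : Finset V) : Set V) = 𝒷 '' {j | j ≠ i} := by
        ext x
        simp only [Finset.coe_erase, Set.mem_diff, Set.mem_image, Set.mem_singleton_iff]
        constructor
        · rintro ⟨hxB, hxi⟩
          refine ⟨⟨x, hxB⟩, ?_, h𝒷 _⟩
          intro h
          exact hxi (congrArg Subtype.val h)
        · rintro ⟨j, hj, rfl⟩
          rw [h𝒷 j]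
          refine ⟨j.2, ?_⟩
          intro h
          exact hj (Subtype.ext h)
      rw [himg, Basis.mem_span_image] at hmem
      have : i ∉ (𝒷.repr e).support := fun h => (hmem h) rfl
      exact hci (by simpa [hc] using Finsupp.notMem_support_iff.mp this)

def castQ {n : ℕ} (p : Fin n → ℤ) : Fin n → ℚ := fun i => (p i : ℚ)

/-- `Δ` is a simplex contained in `S`: a subset of cardinality `n+1`
not contained in an affine hyperplane (i.e. affinely independent). -/
def IsSimplexIn {n : ℕ} (S Δ : Finset (Fin n → ℤ)) : Prop :=
  Δ ⊆ S ∧ Δ.card = n + 1 ∧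
    AffineIndependent ℚ (fun p : {x // x ∈ Δ} => castQ (p : Fin n → ℤ))

/-- barycenter of a finite set of lattice points, viewed in `ℚ^n`. -/
noncomputable def bary {n : ℕ} (Δ : Finset (Fin n → ℤ)) : Fin n → ℚ :=
  ((n : ℚ) + 1)⁻¹ • ∑ p ∈ Δ, castQ p

theorem castQ_inj {n : ℕ} : Function.Injective (castQ (n := n)) := by
  intro p q h
  funext i
  have := congrFun h i
  simp only [castQ] at this
  exact_mod_cast this

noncomputable def liftZ {n : ℕ} (p : Fin n → ℤ) : (Fin n → ℚ) × ℚ := (castQ p, 1)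

theorem liftZ_inj {n : ℕ} : Function.Injective (liftZ (n := n)) := by
  intro p q h
  exact castQ_inj (congrArg Prod.fst h)

theorem bridge {n : ℕ} [DecidableEq ((Fin n → ℚ) × ℚ)] (T : Finset (Fin n → ℤ)) :
    AffineIndependent ℚ (fun p : {x // x ∈ T} => castQ (p : Fin n → ℤ)) ↔
    LinearIndependent ℚ (fun x : ((T.image liftZ : Finset ((Fin n → ℚ) × ℚ)) :
      Set ((Fin n → ℚ) × ℚ)) => (x : (Fin n → ℚ) × ℚ)) := by
  rw [affine_lift]
  rw [show (fun p : {x // x ∈ T} => ((castQ (p : Fin n → ℤ), 1) : (Fin n → ℚ) × ℚ)) =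
    (fun p : ((T : Set (Fin n → ℤ))) => liftZ (p : Fin n → ℤ)) from rfl]
  rw [linearIndependent_image (liftZ_inj.injOn)]
  rw [Finset.coe_image]

theorem finrank_V (n : ℕ) : Module.finrank ℚ ((Fin n → ℚ) × ℚ) = n + 1 := by
  rw [Module.finrank_prod, Module.finrank_pi, Module.finrank_self, Fintype.card_fin]

/-- If two distinct simplexes in `S` share a barycenter, then this barycenter is not
a vertex (extreme point) of the barycentric polytope `B(S)`. -/
theorem stmt_0 (n : ℕ) (S Δ Δ' : Finset (Fin n → ℤ))
    (hΔ : IsSimplexIn S Δ) (hΔ' : IsSimplexIn S Δ') (hne : Δ ≠ Δ')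
    (hb : bary Δ = bary Δ') :
    bary Δ ∉ Set.extremePoints ℚ
      (convexHull ℚ {x : Fin n → ℚ | ∃ T, IsSimplexIn S T ∧ x = bary T}) := by
  classical
  obtain ⟨hΔS, hΔc, hΔa⟩ := hΔ
  obtain ⟨hΔ'S, hΔ'c, hΔ'a⟩ := hΔ'
  -- find m ∈ Δ \ Δ'
  have hns : ¬ Δ ⊆ Δ' := fun h => hne (Finset.eq_of_subset_of_card_le h (by omega))
  obtain ⟨m, hmΔ, hmΔ'⟩ := Finset.not_subset.mp hns
  -- lifted finsets
  set A : Finset ((Fin n → ℚ) × ℚ) := Δ.image liftZ with hAdef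
  set B : Finset ((Fin n → ℚ) × ℚ) := Δ'.image liftZ with hBdef
  have hA := (bridge Δ).mp hΔa
  have hB := (bridge Δ').mp hΔ'a
  have hcA : A.card = Module.finrank ℚ ((Fin n → ℚ) × ℚ) := by
    rw [finrank_V, hAdef, Finset.card_image_of_injective _ liftZ_inj, hΔc]
  have hcB : B.card = Module.finrank ℚ ((Fin n → ℚ) × ℚ) := by
    rw [finrank_V, hBdef, Finset.card_image_of_injective _ liftZ_inj, hΔ'c]
  have heA : liftZ m ∈ A := Finset.mem_image_of_mem _ hmΔ
  have heB : liftZ m ∉ B := by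
    intro h
    obtain ⟨m'', hm'', h⟩ := Finset.mem_image.mp h
    exact hmΔ' (liftZ_inj h ▸ hm'')
  obtain ⟨f, hfB, hfA, hli1, hli2⟩ := exchange A B hA hB hcA hcB heA heB
  obtain ⟨m', hm'Δ', hfm'⟩ := Finset.mem_image.mp hfB
  have hm'Δ : m' ∉ Δ := by
    intro h
    exact hfA (hfm' ▸ Finset.mem_image_of_mem _ h)
  have hmm' : m ≠ m' := fun h => hm'Δ (h ▸ hmΔ)
  -- the two exchanged simplexes
  set Δ₁ : Finset (Fin n → ℤ) := insert m' (Δ.erase m) with hΔ₁def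
  set Δ₂ : Finset (Fin n → ℤ) := insert m (Δ'.erase m') with hΔ₂def
  have himg1 : Δ₁.image liftZ = insert f (A.erase (liftZ m)) := by
    rw [hΔ₁def, Finset.image_insert, Finset.image_erase liftZ_inj, hfm']
  have himg2 : Δ₂.image liftZ = insert (liftZ m) (B.erase f) := by
    rw [hΔ₂def, Finset.image_insert, Finset.image_erase liftZ_inj, hfm']
  have hm'e : m' ∉ Δ.erase m := fun h => hm'Δ (Finset.mem_of_mem_erase h)
  have hme : m ∉ Δ'.erase m' := fun h => hmΔ' (Finset.mem_of_mem_erase h)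
  have hs1 : IsSimplexIn S Δ₁ := by
    refine ⟨?_, ?_, ?_⟩
    · rw [hΔ₁def]
      exact Finset.insert_subset (hΔ'S hm'Δ') ((Finset.erase_subset _ _).trans hΔS)
    · rw [hΔ₁def, Finset.card_insert_of_notMem hm'e, Finset.card_erase_of_mem hmΔ, hΔc]
      omega
    · rw [bridge, himg1]
      exact hli1
  have hs2 : IsSimplexIn S Δ₂ := by
    refine ⟨?_, ?_, ?_⟩
    · rw [hΔ₂def]
      exact Finset.insert_subset (hΔS hmΔ) ((Finset.erase_subset _ _).trans hΔ'S)
    · rw [hΔ₂def, Finset.card_insert_of_notMem hme, Finset.card_erase_of_mem hm'Δ', hΔ'c]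
      omega
    · rw [bridge, himg2]
      exact hli2
  -- sums
  have hn1 : ((n : ℚ) + 1) ≠ 0 := by positivity
  have hsumΔ : ∑ p ∈ Δ, castQ p = ∑ p ∈ Δ', castQ p :=
    smul_right_injective _ (inv_ne_zero hn1) hb
  have hsum1 : ∑ p ∈ Δ₁, castQ p = ∑ p ∈ Δ, castQ p - castQ m + castQ m' := by
    rw [hΔ₁def, Finset.sum_insert hm'e, Finset.sum_erase_eq_sub hmΔ]
    ring
  have hsum2 : ∑ p ∈ Δ₂, castQ p = ∑ p ∈ Δ, castQ p - castQ m' + castQ m := by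
    rw [hΔ₂def, Finset.sum_insert hme, Finset.sum_erase_eq_sub hm'Δ', ← hsumΔ]
    ring
  have hmid : (2⁻¹ : ℚ) • bary Δ₁ + (2⁻¹ : ℚ) • bary Δ₂ = bary Δ := by
    simp only [bary, hsum1, hsum2]
    module
  have hne1 : bary Δ₁ ≠ bary Δ := by
    intro h
    have h2 : ∑ p ∈ Δ₁, castQ p = ∑ p ∈ Δ, castQ p :=
      smul_right_injective _ (inv_ne_zero hn1) h
    rw [hsum1] at h2
    have : castQ m' = castQ m := by
      have := sub_eq_zero.mpr h2
      linear_combination this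
    exact hmm' (castQ_inj this).symm
  intro hext
  rw [mem_extremePoints] at hext
  have h1 : bary Δ₁ ∈ convexHull ℚ {x : Fin n → ℚ | ∃ T, IsSimplexIn S T ∧ x = bary T} :=
    subset_convexHull _ _ ⟨Δ₁, hs1, rfl⟩
  have h2 : bary Δ₂ ∈ convexHull ℚ {x : Fin n → ℚ | ∃ T, IsSimplexIn S T ∧ x = bary T} :=
    subset_convexHull _ _ ⟨Δ₂, hs2, rfl⟩
  have hopen : bary Δ ∈ openSegment ℚ (bary Δ₁) (bary Δ₂) :=
    ⟨2⁻¹, 2⁻¹, by norm_num, by norm_num, by norm_num, hmid⟩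
  exact hne1 (hext.2 _ h1 _ h2 hopen).1
end

section
/- Let Δ = {p_1,…,p_{n+1}} and Δ' = {p_1',…,p_{n+1}'} be two affinely independent subsets of ℚ^n with p_1 ∉ Δ'. Then there exists an index j such that both (Δ \ {p_1}) ∪ {p_j'} and (Δ' \ {p_j'}) ∪ {p_1} are affinely independent. -/
set_option maxHeartbeats 1000000

private lemma aiCongr {V : Type*} [AddCommGroup V] [Module ℚ V] {s t : Set V}
    (h : s = t) (ha : AffineIndependent ℚ (fun p : s => (p : V))) :
    AffineIndependent ℚ (fun p : t => (p : V)) := by subst h; exact ha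

private lemma aiInsert {V : Type*} [AddCommGroup V] [Module ℚ V] {s : Set V} {q : V}
    (h : AffineIndependent ℚ (fun p : s => (p : V)))
    (hq : q ∉ affineSpan ℚ s) :
    AffineIndependent ℚ (fun p : (insert q s : Set V) => (p : V)) := by
  have hqs : q ∉ s := fun hqs => hq (mem_affineSpan ℚ hqs)
  set i : (insert q s : Set V) := ⟨q, Set.mem_insert _ _⟩ with hi
  apply AffineIndependent.affineIndependent_of_notMem_span (i := i)
  · let e : s ≃ {y : (insert q s : Set V) // y ≠ i} :=
      { toFun := fun x => ⟨⟨x, Set.mem_insert_of_mem _ x.2⟩, fun hx => by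
          apply hqs
          have hxq : (x : V) = q := congrArg (fun z => ((z : (insert q s : Set V)) : V)) hx
          rw [← hxq]; exact x.2⟩
        invFun := fun y => ⟨(y : (insert q s : Set V)), by
          rcases (y : (insert q s : Set V)).2 with h1 | h1
          · exact absurd (Subtype.ext h1) y.2
          · exact h1⟩
        left_inv := fun x => rfl
        right_inv := fun y => by ext; rfl }
    exact (affineIndependent_equiv e).mp h
  · have himg : (fun p : (insert q s : Set V) => (p : V)) '' {x | x ≠ i} = s := by
      ext x
      constructor
      · rintro ⟨y, hy, rfl⟩
        rcases y.2 with h1 | h1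
        · exact absurd (Subtype.ext h1) hy
        · exact h1
      · intro hx
        exact ⟨⟨x, Set.mem_insert_of_mem _ hx⟩, fun hc => hqs
          (by have : x = q := congrArg (fun z => ((z : (insert q s : Set V)) : V)) hc
              rwa [← this]), rfl⟩
    rw [himg]
    exact hq

/-- Exchange lemma: if `Δ` and `Δ'` are affinely independent subsets of `ℚ^n` of
cardinality `n+1` and `p₁ ∈ Δ`, `p₁ ∉ Δ'`, then there is `q ∈ Δ'` such that both
`(Δ \ {p₁}) ∪ {q}` and `(Δ' \ {q}) ∪ {p₁}` are affinely independent. -/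
theorem stmt_1 (n : ℕ) (Δ Δ' : Finset (Fin n → ℚ))
    (hcard : Δ.card = n + 1) (hcard' : Δ'.card = n + 1)
    (hai : AffineIndependent ℚ (fun p : {x // x ∈ Δ} => (p : Fin n → ℚ)))
    (hai' : AffineIndependent ℚ (fun p : {x // x ∈ Δ'} => (p : Fin n → ℚ)))
    (p₁ : Fin n → ℚ) (hp₁ : p₁ ∈ Δ) (hp₁' : p₁ ∉ Δ') :
    ∃ q ∈ Δ',
      AffineIndependent ℚ
        (fun p : {x // x ∈ insert q (Δ.erase p₁)} => (p : Fin n → ℚ)) ∧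
      AffineIndependent ℚ
        (fun p : {x // x ∈ insert p₁ (Δ'.erase q)} => (p : Fin n → ℚ)) := by
  classical
  set pt : {x // x ∈ Δ'} → (Fin n → ℚ) := fun p => (p : Fin n → ℚ) with hpt
  -- Step A : p₁ not in span of Δ.erase p₁
  have hA : p₁ ∉ affineSpan ℚ ((Δ.erase p₁ : Finset (Fin n → ℚ)) : Set (Fin n → ℚ)) := by
    have h1 := hai.notMem_affineSpan_diff ⟨p₁, hp₁⟩ Set.univ
    have himg : (fun p : {x // x ∈ Δ} => (p : Fin n → ℚ)) ''
        (Set.univ \ {(⟨p₁, hp₁⟩ : {x // x ∈ Δ})}) = ↑(Δ.erase p₁) := by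
      ext x
      simp only [Set.mem_image, Set.mem_diff, Set.mem_univ, true_and, Set.mem_singleton_iff,
        Finset.coe_erase, Set.mem_diff, Finset.mem_coe, Set.mem_singleton_iff]
      constructor
      · rintro ⟨y, hy, rfl⟩
        exact ⟨y.2, fun h => hy (Subtype.ext h)⟩
      · rintro ⟨hx, hne⟩
        exact ⟨⟨x, hx⟩, fun h => hne (congrArg Subtype.val h), rfl⟩
    rwa [himg] at h1
  -- Step B : span of Δ' is top
  have htop : affineSpan ℚ (Set.range pt) = ⊤ := by
    rw [hai'.affineSpan_eq_top_iff_card_eq_finrank_add_one]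
    simp [Fintype.card_coe, hcard', Module.finrank_fin_fun]
  obtain ⟨w, hw, hcomb⟩ :=
    eq_affineCombination_of_mem_affineSpan_of_fintype
      (show p₁ ∈ affineSpan ℚ (Set.range pt) by rw [htop]; trivial)
  -- Step C : find i with nonzero weight outside span of Δ.erase p₁
  have hC : ∃ i : {x // x ∈ Δ'}, w i ≠ 0 ∧
      (i : Fin n → ℚ) ∉ affineSpan ℚ ((Δ.erase p₁ : Finset (Fin n → ℚ)) : Set (Fin n → ℚ)) := by
    by_contra hcon
    push_neg at hcon
    apply hA
    set pred : {x // x ∈ Δ'} → Prop :=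
      fun i => (i : Fin n → ℚ) ∈ affineSpan ℚ ((Δ.erase p₁ : Finset (Fin n → ℚ)) : Set (Fin n → ℚ))
      with hpred
    have h1 : (Finset.univ.filter pred).affineCombination ℚ pt w =
        Finset.univ.affineCombination ℚ pt w :=
      Finset.univ.affineCombination_filter_of_ne w pt (fun i _ hwi => hcon i hwi)
    have h2 : ((Finset.univ.subtype pred).affineCombination ℚ (fun i => pt i) fun i => w i) =
        (Finset.univ.filter pred).affineCombination ℚ pt w :=
      Finset.univ.affineCombination_subtype_eq_filter w pt pred
    have hsum : (∑ i ∈ Finset.univ.subtype pred, w i) = 1 := by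
      rw [Finset.sum_subtype_eq_sum_filter]
      rw [Finset.sum_filter_of_ne (fun i _ hwi => hcon i hwi)]
      exact hw
    have hmem := affineCombination_mem_affineSpan (k := ℚ) hsum
      (fun i : {i // pred i} => pt i)
    have hle : affineSpan ℚ (Set.range fun i : {i // pred i} => pt i) ≤
        affineSpan ℚ ((Δ.erase p₁ : Finset (Fin n → ℚ)) : Set (Fin n → ℚ)) := by
      rw [affineSpan_le]
      rintro x ⟨j, rfl⟩
      exact j.2
    have : p₁ = (Finset.univ.subtype pred).affineCombination ℚ (fun i => pt i) fun i => w i := by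
      rw [h2, h1]; exact hcomb
    have h3 := hle hmem
    rw [← this] at h3
    exact h3
  obtain ⟨i, hwi, hqH⟩ := hC
  refine ⟨(i : Fin n → ℚ), i.2, ?_, ?_⟩
  · have herase : AffineIndependent ℚ
        (fun p : ((Δ.erase p₁ : Finset (Fin n → ℚ)) : Set (Fin n → ℚ)) => (p : Fin n → ℚ)) :=
      AffineIndependent.mono (t := ((Δ : Finset (Fin n → ℚ)) : Set (Fin n → ℚ))) hai
        (by simp [Finset.coe_subset, Finset.erase_subset])
    exact aiCongr (Finset.coe_insert _ _).symm (aiInsert herase hqH)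
  · have hp₁span : p₁ ∉ affineSpan ℚ ((Δ'.erase (i : Fin n → ℚ) : Finset (Fin n → ℚ)) :
        Set (Fin n → ℚ)) := by
      intro hmem
      have himg : Set.range (fun y : {y : {x // x ∈ Δ'} // y ≠ i} => pt (y : {x // x ∈ Δ'})) =
          ↑(Δ'.erase (i : Fin n → ℚ)) := by
        ext x
        simp only [Set.mem_range, Finset.coe_erase, Set.mem_diff, Finset.mem_coe,
          Set.mem_singleton_iff]
        constructor
        · rintro ⟨y, rfl⟩
          exact ⟨(y : {x // x ∈ Δ'}).2, fun h => y.2 (Subtype.ext h)⟩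
        · rintro ⟨hx, hne⟩
          exact ⟨⟨⟨x, hx⟩, fun h => hne (congrArg Subtype.val h)⟩, rfl⟩
      rw [← himg] at hmem
      obtain ⟨w', hw', hcomb'⟩ := eq_affineCombination_of_mem_affineSpan_of_fintype hmem
      set w'' : {x // x ∈ Δ'} → ℚ := fun x => if h : x ≠ i then w' ⟨x, h⟩ else 0 with hw''def
      have hne0 : ∀ x ∈ Finset.univ, w'' x ≠ 0 → x ≠ i := by
        intro x _ hx
        by_contra hc
        exact hx (by simp [hw''def, hc])
      have hcombeq : Finset.univ.affineCombination ℚ pt w'' = p₁ := by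
        rw [← Finset.univ.affineCombination_filter_of_ne w'' pt hne0,
          ← Finset.univ.affineCombination_subtype_eq_filter w'' pt (fun x => x ≠ i)]
        have hu : Finset.univ.subtype (fun x : {x // x ∈ Δ'} => x ≠ i) = Finset.univ := by
          ext y; simp
        rw [hu, hcomb']
        congr 1
        funext y
        simp [hw''def, y.2]
      have hsum'' : ∑ x, w'' x = 1 := by
        rw [← Finset.sum_filter_of_ne hne0, ← Finset.sum_subtype_eq_sum_filter]
        have hu : Finset.univ.subtype (fun x : {x // x ∈ Δ'} => x ≠ i) = Finset.univ := by
          ext y; simp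
        rw [hu, ← hw']
        apply Finset.sum_congr rfl
        intro y _
        simp [hw''def, y.2]
      have heq := (affineIndependent_iff_eq_of_fintype_affineCombination_eq ℚ pt).mp hai'
        w w'' hw hsum'' (by rw [hcombeq, hcomb])
      rw [heq] at hwi
      exact hwi (by simp [hw''def])
    have herase' : AffineIndependent ℚ
        (fun p : ((Δ'.erase (i : Fin n → ℚ) : Finset (Fin n → ℚ)) : Set (Fin n → ℚ)) =>
          (p : Fin n → ℚ)) :=
      AffineIndependent.mono (t := ((Δ' : Finset (Fin n → ℚ)) : Set (Fin n → ℚ))) hai'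
        (by simp [Finset.coe_subset, Finset.erase_subset])
    exact aiCongr (Finset.coe_insert _ _).symm (aiInsert herase' hp₁span)
end

section
/- Let A be an n×n matrix over a commutative ring, let m < n, and fix a set of row indices J = {j_1 < … < j_m}. Then det(A) = ∑_{I = {i_1 < … < i_m} ⊆ [n]} (-1)^{i_1+…+i_m+j_1+…+j_m} · A_{J,I} · A_{J',I'}, where I' = [n] \ I, J' = [n] \ J, and A_{K,L} denotes the determinant of the submatrix of A with rows indexed by K and columns by L. -/
open Finset Equiv
namespace Laplace
variable {n m : ℕ}


variable {n m : ℕ}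

/-- compl of image under a perm -/
theorem image_compl (e : Equiv.Perm (Fin n)) (s : Finset (Fin n)) :
    sᶜ.image e = (s.image e)ᶜ := by
  ext x
  simp only [mem_image, mem_compl]
  constructor
  · rintro ⟨a, ha, rfl⟩ ⟨b, hb, hba⟩
    exact ha (e.injective hba ▸ hb)
  · intro h
    exact ⟨e.symm x, fun hs => h ⟨_, hs, e.apply_symm_apply x⟩, e.apply_symm_apply x⟩

/-- Lemma C: swapping two adjacent values, exactly one of which is in `s`,
commutes with `orderEmbOfFin`. -/
theorem orderEmbOfFin_swap {c j : ℕ} (hj : j + 1 < n)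
    (s t : Finset (Fin n)) (hs : s.card = c) (ht : t.card = c)
    (x y : Fin n) (hx : (x : ℕ) = j) (hy : (y : ℕ) = j + 1)
    (hone : (x ∈ s ∧ y ∉ s) ∨ (y ∈ s ∧ x ∉ s))
    (hts : t = s.image (Equiv.swap x y)) (a : Fin c) :
    t.orderEmbOfFin ht a = Equiv.swap x y (s.orderEmbOfFin hs a) := by
  have hxy : x ≠ y := by intro h; rw [h, hy] at hx; omega
  have key : ∀ b : Fin c, (fun b => Equiv.swap x y (s.orderEmbOfFin hs b)) b ∈ t := by
    intro b
    rw [hts]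
    exact mem_image_of_mem _ (s.orderEmbOfFin_mem hs b)
  have hmono : StrictMono fun b => Equiv.swap x y (s.orderEmbOfFin hs b) := by
    intro a b hab
    have h1 : s.orderEmbOfFin hs a < s.orderEmbOfFin hs b :=
      (s.orderEmbOfFin hs).strictMono hab
    set u := s.orderEmbOfFin hs a with hu
    set v := s.orderEmbOfFin hs b with hv
    have hu' : u ∈ s := s.orderEmbOfFin_mem hs a
    have hv' : v ∈ s := s.orderEmbOfFin_mem hs b
    show Equiv.swap x y u < Equiv.swap x y v
    rw [Equiv.swap_apply_def, Equiv.swap_apply_def]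
    have huv : (u : ℕ) < (v : ℕ) := h1
    have hmem : ∀ z : Fin n, z ∈ s → ((x ∉ s → (z : ℕ) ≠ j) ∧ (y ∉ s → (z : ℕ) ≠ j + 1)) := by
      intro z hz
      constructor
      · intro hxs hzz; exact hxs (show x ∈ s from (Fin.ext (hzz.symm ▸ hx.symm : (z:ℕ) = (x:ℕ))).symm ▸ hz)
      · intro hys hzz; exact hys (show y ∈ s from (Fin.ext (hzz.symm ▸ hy.symm : (z:ℕ) = (y:ℕ))).symm ▸ hz)
    have hu2 := hmem u hu'
    have hv2 := hmem v hv'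
    rcases hone with ⟨hxs, hys⟩ | ⟨hys, hxs⟩ <;>
    · have h3 := hu2.1 ; have h4 := hu2.2 ; have h5 := hv2.1 ; have h6 := hv2.2
      simp only [Fin.ext_iff, Fin.lt_iff_val_lt_val, apply_ite (Fin.val), hx, hy]
      split_ifs <;> first
        | omega
        | (exfalso; first | exact hys (by omega) | exact hxs (by omega)
           )
        | (first
            | exact absurd (h4 hys) (by omega) | exact absurd (h6 hys) (by omega)
            | exact absurd (h3 hxs) (by omega) | exact absurd (h5 hxs) (by omega)
            | omega)
  have huniq := Finset.orderEmbOfFin_unique ht key hmono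
  exact (congrFun huniq a).symm
variable {n m : ℕ}

/-- The bijection `Fin m ⊕ Fin (n-m) ≃ Fin n` given by sorting `I` then `Iᶜ`. -/
def rho (hm : m ≤ n) (I : Finset (Fin n)) (hI : I.card = m) : (Fin m ⊕ Fin (n - m)) ≃ Fin n :=
  (Equiv.sumCongr (I.orderIsoOfFin hI).toEquiv
      ((Iᶜ.orderIsoOfFin (by simp [Finset.card_compl, hI])).toEquiv.trans
        (Equiv.subtypeEquivRight (fun x => Finset.mem_compl)))).trans
    (Equiv.sumCompl (· ∈ I))

@[simp] theorem rho_inl (hm : m ≤ n) (I : Finset (Fin n)) (hI : I.card = m) (a : Fin m) :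
    rho hm I hI (Sum.inl a) = I.orderEmbOfFin hI a := rfl

@[simp] theorem rho_inr (hm : m ≤ n) (I : Finset (Fin n)) (hI : I.card = m) (b : Fin (n - m)) :
    rho hm I hI (Sum.inr b) = Iᶜ.orderEmbOfFin (by simp [Finset.card_compl, hI]) b := rfl

theorem rho_inl_mem (hm : m ≤ n) (I : Finset (Fin n)) (hI : I.card = m) (a : Fin m) :
    rho hm I hI (Sum.inl a) ∈ I := by
  rw [rho_inl]; exact I.orderEmbOfFin_mem hI a

theorem rho_inr_not_mem (hm : m ≤ n) (I : Finset (Fin n)) (hI : I.card = m) (b : Fin (n - m)) :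
    rho hm I hI (Sum.inr b) ∉ I := by
  rw [rho_inr]
  have := Iᶜ.orderEmbOfFin_mem (by simp [Finset.card_compl, hI]) b
  exact Finset.mem_compl.mp this

theorem mem_iff_rho (hm : m ≤ n) (I : Finset (Fin n)) (hI : I.card = m) (x : Fin n) :
    x ∈ I ↔ ∃ a, x = rho hm I hI (Sum.inl a) := by
  constructor
  · intro hx
    rcases (rho hm I hI).surjective x with ⟨z, rfl⟩
    cases z with
    | inl a => exact ⟨a, rfl⟩
    | inr b => exact absurd hx (rho_inr_not_mem hm I hI b)
  · rintro ⟨a, rfl⟩; exact rho_inl_mem hm I hI a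

/-- the initial segment `{0, …, m-1}` of `Fin n`. -/
def seg (hm : m ≤ n) : Finset (Fin n) :=
  (Finset.univ : Finset (Fin m)).map (Fin.castLEEmb hm)

@[simp] theorem mem_seg (hm : m ≤ n) (x : Fin n) : x ∈ seg hm ↔ (x : ℕ) < m := by
  simp only [seg, Finset.mem_map, Finset.mem_univ, true_and, RelEmbedding.coe_toEmbedding]
  constructor
  · rintro ⟨a, rfl⟩; simpa using a.isLt
  · intro h; exact ⟨⟨x, h⟩, Fin.ext rfl⟩

@[simp] theorem card_seg (hm : m ≤ n) : (seg hm).card = m := by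
  simp [seg]

theorem sum_seg (hm : m ≤ n) : ∑ i ∈ seg hm, (i : ℕ) = ∑ k ∈ Finset.range m, k := by
  rw [seg, Finset.sum_map, ← Fin.sum_univ_eq_sum_range]
  rfl

/-- the shuffle permutation associated to `I`. -/
def piPerm (hm : m ≤ n) (I : Finset (Fin n)) (hI : I.card = m) : Equiv.Perm (Fin n) :=
  (rho hm (seg hm) (card_seg hm)).symm.trans (rho hm I hI)

@[simp] theorem piPerm_seg (hm : m ≤ n) : piPerm hm (seg hm) (card_seg hm) = Equiv.refl _ := by
  simp [piPerm]



/-- a downward-closed set of card `m` is the initial segment -/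
theorem eq_seg_of_closed (hm : m ≤ n) (I : Finset (Fin n)) (hI : I.card = m)
    (hcl : ∀ i ∈ I, ∀ k : ℕ, (hk : k ≤ (i : ℕ)) → (⟨k, lt_of_le_of_lt hk i.isLt⟩ : Fin n) ∈ I) :
    I = seg hm := by
  have hsub : I ⊆ seg hm := by
    intro x hx
    rw [mem_seg]
    by_contra hxm
    push_neg at hxm
    -- seg (x.val+1) ⊆ I
    have h1 : (x : ℕ) + 1 ≤ n := x.isLt
    have hsub2 : seg h1 ⊆ I := by
      intro z hz
      rw [mem_seg] at hz
      have := hcl x hx z (by omega)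
      simpa [Fin.eta] using this
    have := Finset.card_le_card hsub2
    rw [card_seg, hI] at this
    omega
  exact Finset.eq_of_subset_of_card_le hsub (by rw [card_seg, hI])

theorem exists_drop (hm : m ≤ n) (I : Finset (Fin n)) (hI : I.card = m) (hne : I ≠ seg hm) :
    ∃ i ∈ I, (i : ℕ) ≠ 0 ∧ (⟨(i : ℕ) - 1, lt_of_le_of_lt (Nat.sub_le _ _) i.isLt⟩ : Fin n) ∉ I := by
  by_contra hc
  push_neg at hc
  apply hne
  apply eq_seg_of_closed hm I hI
  -- downward closure from predecessor closure
  have key : ∀ d : ℕ, ∀ i ∈ I, ∀ k : ℕ, ∀ hkn : k < n, k + d = (i : ℕ) →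
      (⟨k, hkn⟩ : Fin n) ∈ I := by
    intro d
    induction d with
    | zero =>
      intro i hi k hkn hk
      have : (⟨k, hkn⟩ : Fin n) = i := Fin.ext (by simpa using hk)
      rwa [this]
    | succ d ih =>
      intro i hi k hkn hk
      have hi0 : (i : ℕ) ≠ 0 := by omega
      have h1 := hc i hi hi0
      exact ih _ h1 k (by omega) (by simp; omega)
  intro i hi k hk
  exact key ((i : ℕ) - k) i hi k _ (by omega)

/-- Lemma A: sign of the shuffle permutation. -/
theorem sign_piPerm (hm : m ≤ n) (I : Finset (Fin n)) (hI : I.card = m) :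
    Equiv.Perm.sign (piPerm hm I hI) =
      (-1 : ℤˣ) ^ (∑ i ∈ I, (i : ℕ) + ∑ k ∈ Finset.range m, k) := by
  set N := ∑ i ∈ I, (i : ℕ) with hN
  clear_value N
  induction N using Nat.strong_induction_on generalizing I with
  | _ N ih =>
  rcases eq_or_ne I (seg hm) with rfl | hne
  · rw [piPerm_seg]
    rw [sum_seg] at hN
    subst hN
    simp [← two_mul, pow_mul]
  · obtain ⟨i, hiI, hi0, hpred'⟩ := exists_drop hm I hI hne
    set x : Fin n := ⟨(i : ℕ) - 1, lt_of_le_of_lt (Nat.sub_le _ _) i.isLt⟩ with hxdef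
    set I' : Finset (Fin n) := I.image (Equiv.swap x i) with hI'def
    have hswapinj : Function.Injective (Equiv.swap x i) := (Equiv.swap x i).injective
    have hI' : I'.card = m := by rw [hI'def, Finset.card_image_of_injective _ hswapinj, hI]
    have hxi : x ≠ i := by
      intro h; apply hi0; have := congrArg Fin.val h; simp [hxdef] at this; omega
    -- sum over I'
    have hsum' : (∑ z ∈ I', (z : ℕ)) + 1 = N := by
      rw [hI'def, Finset.sum_image (fun a _ b _ h => hswapinj h)]
      rw [hN]
      rw [← Finset.sum_erase_add I (fun z => ((Equiv.swap x i z : Fin n) : ℕ)) hiI,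
        ← Finset.sum_erase_add I (fun z : Fin n => (z : ℕ)) hiI]
      have h1 : ∀ z ∈ I.erase i, ((Equiv.swap x i z : Fin n) : ℕ) = (z : ℕ) := by
        intro z hz
        have hz1 : z ≠ i := Finset.ne_of_mem_erase hz
        have hz2 : z ≠ x := by
          intro h; exact hpred' (h ▸ (Finset.mem_of_mem_erase hz))
        rw [Equiv.swap_apply_of_ne_of_ne hz2 hz1]
      rw [Finset.sum_congr rfl h1]
      have : ((Equiv.swap x i i : Fin n) : ℕ) = (i : ℕ) - 1 := by
        rw [Equiv.swap_apply_right]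
      rw [this]
      have hee : (∑ z ∈ I.erase i, (z : ℕ)) = (I.erase i).sum Fin.val := rfl
      omega
    -- the key identity: rho I = swap ∘ rho I'
    have hIimage : I = I'.image (Equiv.swap x i) := by
      rw [hI'def, Finset.image_image]
      have : (Equiv.swap x i) ∘ (Equiv.swap x i) = id := by
        funext z; simp
      rw [this, Finset.image_id]
    have hcomplimage : Iᶜ = I'ᶜ.image (Equiv.swap x i) := by
      rw [image_compl, ← hIimage]
    have hxI' : x ∈ I' := by
      rw [hI'def, Finset.mem_image]
      exact ⟨i, hiI, Equiv.swap_apply_right x i⟩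
    have hiI' : i ∉ I' := by
      rw [hI'def, Finset.mem_image]
      rintro ⟨z, hz, hzi⟩
      have : z = x := by
        have := congrArg (Equiv.swap x i) hzi
        rwa [Equiv.swap_apply_self, Equiv.swap_apply_right] at this
      exact hpred' (this ▸ hz)
    have hj1 : ((i : ℕ) - 1) + 1 < n := by have := i.isLt; omega
    have hrho : ∀ z, rho hm I hI z = Equiv.swap x i (rho hm I' hI' z) := by
      intro z
      cases z with
      | inl a =>
        rw [rho_inl, rho_inl]
        exact orderEmbOfFin_swap hj1 I' I hI' hI x i rfl (by omega)
          (Or.inl ⟨hxI', hiI'⟩) hIimage a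
      | inr b =>
        rw [rho_inr, rho_inr]
        exact orderEmbOfFin_swap hj1 I'ᶜ Iᶜ (by simp [Finset.card_compl, hI'])
          (by simp [Finset.card_compl, hI]) x i rfl (by omega)
          (Or.inr ⟨Finset.mem_compl.mpr hiI', fun hx2 => (Finset.mem_compl.mp hx2) hxI'⟩) hcomplimage b
    have hpiPerm : piPerm hm I hI = (Equiv.swap x i) * (piPerm hm I' hI') := by
      apply Equiv.ext
      intro z
      simp only [piPerm, Equiv.Perm.mul_apply, Equiv.trans_apply]
      exact hrho _
    rw [hpiPerm, map_mul, Equiv.Perm.sign_swap hxi]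
    rw [ih (N - 1) (by omega) I' hI' (by omega)]
    have harith : N - 1 + ∑ k ∈ Finset.range m, k = ∑ k ∈ Finset.range m, k + ∑ z ∈ I', (z : ℕ) := by
      omega
    have harith2 : N + ∑ k ∈ Finset.range m, k = (∑ k ∈ Finset.range m, k + ∑ z ∈ I', (z : ℕ)) + 1 := by
      omega
    rw [harith, harith2, pow_succ, mul_comm]


theorem sign_pair (hm : m ≤ n) (I J : Finset (Fin n)) (hI : I.card = m) (hJ : J.card = m) :
    Equiv.Perm.sign ((rho hm J hJ).symm.trans (rho hm I hI)) =
      (-1 : ℤˣ) ^ (∑ i ∈ I, (i : ℕ) + ∑ j ∈ J, (j : ℕ)) := by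
  have hdecomp : (rho hm J hJ).symm.trans (rho hm I hI) =
      ((piPerm hm J hJ).symm.trans (piPerm hm I hI) : Equiv.Perm (Fin n)) := by
    apply Equiv.ext
    intro z
    simp [piPerm]
  rw [hdecomp]
  have : ((piPerm hm J hJ).symm.trans (piPerm hm I hI) : Equiv.Perm (Fin n)) =
      (piPerm hm I hI) * (piPerm hm J hJ)⁻¹ := rfl
  rw [this, map_mul, map_inv, sign_piPerm, sign_piPerm]
  set R := ∑ k ∈ Finset.range m, k
  set a := ∑ i ∈ I, (i : ℕ)
  set b := ∑ j ∈ J, (j : ℕ)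
  have h1 : ((-1 : ℤˣ) ^ (b + R))⁻¹ = (-1 : ℤˣ) ^ (b + R) := by
    simp
  rw [h1, ← pow_add]
  have : a + R + (b + R) = (a + b) + 2 * R := by ring
  rw [this, pow_add, pow_mul]
  simp

variable (hm : m ≤ n)

/-- The decomposition map for permutations. -/
def phi (J : Finset (Fin n)) (hJ : J.card = m) (hm : m ≤ n)
    (p : {I : Finset (Fin n) // I ∈ Finset.univ.powersetCard m} ×
      Equiv.Perm (Fin m) × Equiv.Perm (Fin (n - m))) : Equiv.Perm (Fin n) :=
  (rho hm J hJ).symm.trans ((Equiv.sumCongr p.2.1 p.2.2).trans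
    (rho hm p.1.1 (Finset.mem_powersetCard.mp p.1.2).2))

theorem phi_mem_iff (J : Finset (Fin n)) (hJ : J.card = m) (hm : m ≤ n) (p) (x : Fin n) :
    phi J hJ hm p x ∈ (p.1.1 : Finset (Fin n)) ↔ x ∈ J := by
  obtain ⟨⟨I, hImem⟩, f, g⟩ := p
  have hI : I.card = m := (Finset.mem_powersetCard.mp hImem).2
  cases hz : (rho hm J hJ).symm x with
  | inl a =>
    have hx : x = rho hm J hJ (Sum.inl a) := by rw [← hz, Equiv.apply_symm_apply]
    have h1 : phi J hJ hm ⟨⟨I, hImem⟩, f, g⟩ x =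
        rho hm I hI (Sum.inl (f a)) := by
      simp [phi, hz]
    rw [h1, hx]
    exact iff_of_true (rho_inl_mem hm I hI (f a)) (rho_inl_mem hm J hJ a)
  | inr b =>
    have hx : x = rho hm J hJ (Sum.inr b) := by rw [← hz, Equiv.apply_symm_apply]
    have h1 : phi J hJ hm ⟨⟨I, hImem⟩, f, g⟩ x =
        rho hm I hI (Sum.inr (g b)) := by
      simp [phi, hz]
    rw [h1, hx]
    exact iff_of_false (rho_inr_not_mem hm I hI (g b)) (rho_inr_not_mem hm J hJ b)

theorem phi_injective (J : Finset (Fin n)) (hJ : J.card = m) (hm : m ≤ n) :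
    Function.Injective (phi J hJ hm) := by
  rintro ⟨⟨I, hImem⟩, f, g⟩ ⟨⟨I', hImem'⟩, f', g'⟩ h
  have hI : I.card = m := (Finset.mem_powersetCard.mp hImem).2
  have hI' : I'.card = m := (Finset.mem_powersetCard.mp hImem').2
  -- first, the finsets agree
  have hII' : I = I' := by
    ext y
    rcases (phi J hJ hm ⟨⟨I, hImem⟩, f, g⟩).surjective y with ⟨x, rfl⟩
    rw [show (phi J hJ hm ⟨⟨I, hImem⟩, f, g⟩ x ∈ I) ↔ x ∈ J from
      phi_mem_iff J hJ hm ⟨⟨I, hImem⟩, f, g⟩ x]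
    rw [h]
    exact (phi_mem_iff J hJ hm ⟨⟨I', hImem'⟩, f', g'⟩ x).symm
  subst hII'
  -- then the permutations agree
  have hsum : Equiv.sumCongr f g = Equiv.sumCongr f' g' := by
    have h2 : ∀ z, (Equiv.sumCongr f g).trans (rho hm I hI) z =
        (Equiv.sumCongr f' g').trans (rho hm I hI) z := by
      intro z
      have := congrArg (fun e => e ((rho hm J hJ) z)) h
      simpa [phi] using this
    apply Equiv.ext
    intro z
    exact (rho hm I hI).injective (h2 z)
  have hf : f = f' := by
    apply Equiv.ext; intro a
    have := congrArg (fun e : Equiv.Perm (Fin m ⊕ Fin (n - m)) => e (Sum.inl a)) hsum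
    simpa using this
  have hg : g = g' := by
    apply Equiv.ext; intro b
    have := congrArg (fun e : Equiv.Perm (Fin m ⊕ Fin (n - m)) => e (Sum.inr b)) hsum
    simpa using this
  simp [hf, hg]

theorem phi_bijective (J : Finset (Fin n)) (hJ : J.card = m) (hm : m ≤ n) :
    Function.Bijective (phi J hJ hm) := by
  rw [Fintype.bijective_iff_injective_and_card]
  refine ⟨phi_injective J hJ hm, ?_⟩
  simp only [Fintype.card_prod, Fintype.card_coe, Fintype.card_perm,
    Finset.card_powersetCard, Finset.card_univ, Fintype.card_fin]
  rw [← Nat.choose_mul_factorial_mul_factorial hm, mul_assoc]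

end Laplace

open Laplace in
/-- Laplace's generalized expansion of the determinant along a fixed set `J` of `m` rows. -/
theorem stmt_4 {R : Type*} [CommRing R] (n m : ℕ) (hmn : m < n)
    (A : Matrix (Fin n) (Fin n) R) (J : Finset (Fin n)) (hJ : J.card = m) :
    A.det = ∑ I ∈ (Finset.univ.powersetCard m (α := Fin n)).attach,
      (-1 : R) ^ (∑ i ∈ (I : Finset (Fin n)), (i : ℕ) + ∑ j ∈ J, (j : ℕ)) *
        Matrix.det (Matrix.of fun a b : Fin m =>
          A (J.orderIsoOfFin hJ a)
            ((I : Finset (Fin n)).orderIsoOfFin (Finset.mem_powersetCard.mp I.2).2 b)) *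
        Matrix.det (Matrix.of fun a b : Fin (n - m) =>
          A (Jᶜ.orderIsoOfFin (by simp [Finset.card_compl, hJ]) a)
            (((I : Finset (Fin n))ᶜ).orderIsoOfFin
              (by simp [Finset.card_compl, (Finset.mem_powersetCard.mp I.2).2]) b)) := by
  classical
  have hm : m ≤ n := hmn.le
  rw [← Matrix.det_transpose A, Matrix.det_apply']
  rw [← Fintype.sum_bijective (phi J hJ hm) (phi_bijective J hJ hm) _ _ (fun p => rfl)]
  rw [Fintype.sum_prod_type, Finset.attach_eq_univ]
  apply Finset.sum_congr rfl
  intro I _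
  have hI : (I : Finset (Fin n)).card = m := (Finset.mem_powersetCard.mp I.2).2
  have hIc : ((I : Finset (Fin n))ᶜ).card = n - m := by simp [Finset.card_compl, hI]
  have hJc : (Jᶜ).card = n - m := by simp [Finset.card_compl, hJ]
  -- expand the two sub-determinants
  rw [← Matrix.det_transpose (Matrix.of fun a b : Fin m => _),
    ← Matrix.det_transpose (Matrix.of fun a b : Fin (n-m) => _),
    Matrix.det_apply', Matrix.det_apply']
  have expand : ∀ (c : R) (u : Equiv.Perm (Fin m) → R) (v : Equiv.Perm (Fin (n - m)) → R),
      c * (∑ f, u f) * (∑ g, v g) = ∑ f, ∑ g, c * u f * v g := by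
    intro c u v
    rw [mul_assoc, Fintype.sum_mul_sum, Finset.mul_sum]
    exact Finset.sum_congr rfl fun f _ => by
      rw [Finset.mul_sum]
      exact Finset.sum_congr rfl fun g _ => by ring
  rw [expand, Fintype.sum_prod_type]
  apply Finset.sum_congr rfl
  intro f _
  apply Finset.sum_congr rfl
  intro g _
  -- pointwise identity
  have hsign : Equiv.Perm.sign (phi J hJ hm ⟨I, f, g⟩) =
      (-1 : ℤˣ) ^ (∑ i ∈ (I : Finset (Fin n)), (i : ℕ) + ∑ j ∈ J, (j : ℕ)) *
        Equiv.Perm.sign f * Equiv.Perm.sign g := by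
    have hdecomp : phi J hJ hm ⟨I, f, g⟩ =
        ((rho hm J hJ).symm.trans (rho hm (I : Finset (Fin n)) hI)) *
          (Equiv.permCongr (rho hm J hJ) (Equiv.sumCongr f g)) := by
      apply Equiv.ext
      intro z
      simp [phi, Equiv.permCongr, Equiv.Perm.mul_apply]
    rw [hdecomp, map_mul, sign_pair, Equiv.Perm.sign_permCongr, Equiv.Perm.sign_sumCongr,
      mul_assoc]
  have hprod : (∏ i, A i (phi J hJ hm ⟨I, f, g⟩ i)) =
      (∏ a, A (rho hm J hJ (Sum.inl a)) (rho hm (I : Finset (Fin n)) hI (Sum.inl (f a)))) *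
      (∏ b, A (rho hm J hJ (Sum.inr b)) (rho hm (I : Finset (Fin n)) hI (Sum.inr (g b)))) := by
    have hsymm1 : ∀ a : Fin m, (rho hm J hJ).symm (J.orderEmbOfFin hJ a) = Sum.inl a := fun a => by
      rw [← rho_inl hm J hJ a, Equiv.symm_apply_apply]
    have hsymm2 : ∀ b : Fin (n - m),
        (rho hm J hJ).symm (Jᶜ.orderEmbOfFin (by simp [Finset.card_compl, hJ]) b) = Sum.inr b := fun b => by
      rw [← rho_inr hm J hJ b, Equiv.symm_apply_apply]
    rw [← Equiv.prod_comp (rho hm J hJ) (fun i => A i (phi J hJ hm ⟨I, f, g⟩ i))]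
    rw [Fintype.prod_sum_type]
    congr 1 <;> (apply Finset.prod_congr rfl; intro a _; congr 1) <;>
      simp [phi, hsymm1, hsymm2]
  have hcast : ∀ σ : Equiv.Perm (Fin n), ((Equiv.Perm.sign σ : ℤ) : R) = ((Equiv.Perm.sign σ : ℤˣ) : ℤ) := by
    intro σ; norm_cast
  calc ((Equiv.Perm.sign (phi J hJ hm ⟨I, f, g⟩) : ℤ) : R) *
        ∏ i, Matrix.transpose A (phi J hJ hm ⟨I, f, g⟩ i) i
      = ((Equiv.Perm.sign (phi J hJ hm ⟨I, f, g⟩) : ℤ) : R) *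
        ∏ i, A i (phi J hJ hm ⟨I, f, g⟩ i) := rfl
    _ = _ := by
        rw [hprod]
        rw [show ((Equiv.Perm.sign (phi J hJ hm ⟨I, f, g⟩) : ℤ) : R) =
          (-1 : R) ^ (∑ i ∈ (I : Finset (Fin n)), (i : ℕ) + ∑ j ∈ J, (j : ℕ)) *
            ((Equiv.Perm.sign f : ℤ) : R) * ((Equiv.Perm.sign g : ℤ) : R) from by
          rw [hsign]; push_cast; ring]
        have h1 : ∀ a : Fin m, A (rho hm J hJ (Sum.inl a)) (rho hm (I : Finset (Fin n)) hI (Sum.inl (f a)))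
            = (Matrix.of fun a b : Fin m =>
                A (J.orderIsoOfFin hJ a) ((I : Finset (Fin n)).orderIsoOfFin (Finset.mem_powersetCard.mp I.2).2 b)).transpose (f a) a := by
          intro a
          simp [Finset.coe_orderIsoOfFin_apply]
        have h2 : ∀ b : Fin (n - m), A (rho hm J hJ (Sum.inr b)) (rho hm (I : Finset (Fin n)) hI (Sum.inr (g b)))
            = (Matrix.of fun a b : Fin (n - m) =>
                A (Jᶜ.orderIsoOfFin (by simp [Finset.card_compl, hJ]) a)
                  (((I : Finset (Fin n))ᶜ).orderIsoOfFin (by simp [Finset.card_compl, (Finset.mem_powersetCard.mp I.2).2]) b)).transpose (g b) b := by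
          intro b
          simp [Finset.coe_orderIsoOfFin_apply]
        rw [Finset.prod_congr rfl (fun a _ => h1 a), Finset.prod_congr rfl (fun b _ => h2 b)]
        ring
end

section
/- Let P ⊂ ℝ^n be a full-dimensional lattice polytope, Δ ⊆ P a lattice simplex separated by an affine hyperplane from the convex hull P_0 of the lattice points of P \ Δ. Then for every regular subdivision S(P_0, w_0) of P_0 induced by a weight function w_0 on the lattice points of P_0, there exists a weight function w on the lattice points of P extending w_0 such that the induced regular subdivision S(P, w) contains all polytopes of S(P_0, w_0) and contains Δ as a cell. -/
def castR {n : ℕ} (p : Fin n → ℤ) : Fin n → ℝ := fun i => (p i : ℝ)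

/-- `F` is a cell of the regular subdivision of the point configuration `A ⊆ ℤ^n`
induced by the weight function `w`: there is an affine function agreeing with `w`
on `F` and strictly below `w` on the remaining points of `A` (a lower face of the
lifted polytope projects onto `conv F`). -/
def IsCell {n : ℕ} (A : Finset (Fin n → ℤ)) (w : (Fin n → ℤ) → ℝ)
    (F : Finset (Fin n → ℤ)) : Prop :=
  F ⊆ A ∧ ∃ (g : Fin n → ℝ) (c : ℝ),
    (∀ p ∈ F, w p = ∑ i, g i * (p i : ℝ) + c) ∧
    (∀ p ∈ A, p ∉ F → ∑ i, g i * (p i : ℝ) + c < w p)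

/-- Let `L` be the lattice points of a lattice polytope `P`, and `Δ ⊆ L` a lattice
simplex separated by an affine hyperplane from the convex hull of `L \ Δ`. Then every
regular subdivision of `L \ Δ` induced by a weight `w₀` extends to a regular
subdivision of `L` induced by a weight `w` which contains all cells of the former and
contains `Δ` as a cell. -/
theorem stmt_11 (n : ℕ) (L Δ : Finset (Fin n → ℤ))
    (hΔL : Δ ⊆ L) (hcard : Δ.card = n + 1)
    (hai : AffineIndependent ℝ (fun p : {x // x ∈ Δ} => castR (p : Fin n → ℤ)))
    (hsep : ∃ (g : Fin n → ℝ) (c : ℝ),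
      (∀ p ∈ Δ, 0 < ∑ i, g i * (p i : ℝ) + c) ∧
      (∀ p ∈ L, p ∉ Δ → ∑ i, g i * (p i : ℝ) + c < 0))
    (w₀ : (Fin n → ℤ) → ℝ) :
    ∃ w : (Fin n → ℤ) → ℝ,
      (∀ p ∈ L, p ∉ Δ → w p = w₀ p) ∧
      (∀ F : Finset (Fin n → ℤ), IsCell (L \ Δ) w₀ F → IsCell L w F) ∧
      IsCell L w Δ := by
  classical
  obtain ⟨s, d, hΔpos, hneg⟩ := hsep
  set S : (Fin n → ℤ) → ℝ := fun p => ∑ i, s i * (p i : ℝ) + d with hSdef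
  have hchoice : ∀ F : Finset (Fin n → ℤ), IsCell (L \ Δ) w₀ F →
      ∃ (g : Fin n → ℝ) (c : ℝ), (∀ p ∈ F, w₀ p = ∑ i, g i * (p i : ℝ) + c) ∧
        (∀ p ∈ L \ Δ, p ∉ F → ∑ i, g i * (p i : ℝ) + c < w₀ p) := fun F h => h.2
  choose! g c hgc hlt using hchoice
  set T := (L \ Δ).powerset with hT
  set bnd : Finset (Fin n → ℤ) × (Fin n → ℤ) → ℝ :=
    fun q => (∑ i, g q.1 i * (q.2 i : ℝ) + c q.1) / S q.2 with hbnd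
  set bnd2 : (Fin n → ℤ) → ℝ := fun p => w₀ p / S p with hbnd2
  set Bset := insert (0:ℝ) (((T ×ˢ Δ).image bnd) ∪ ((L \ Δ).image bnd2)) with hBset
  set M := Bset.max' ⟨0, Finset.mem_insert_self _ _⟩ + 1 with hMdef
  have hM : ∀ x ∈ Bset, x < M := fun x hx =>
    lt_of_le_of_lt (Finset.le_max' _ _ hx) (lt_add_one _)
  clear_value M
  have key : ∀ q : Fin n → ℤ, ∑ i, M * s i * (q i : ℝ) + M * d = M * S q := by
    intro q
    rw [hSdef, mul_add, Finset.mul_sum]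
    simp [mul_assoc]
  refine ⟨fun p => if p ∈ Δ then M * S p else w₀ p, ?_, ?_, ?_⟩
  · intro p _ hp
    simp [hp]
  · intro F hF
    have hFsub : F ⊆ L \ Δ := hF.1
    refine ⟨hFsub.trans (Finset.sdiff_subset), g F, c F, ?_, ?_⟩
    · intro p hp
      have hpΔ : p ∉ Δ := (Finset.mem_sdiff.mp (hFsub hp)).2
      simp only [hpΔ, if_false]
      exact hgc F hF p hp
    · intro p hpL hpF
      by_cases hpΔ : p ∈ Δ
      · simp only [hpΔ, if_true]
        have hSpos : 0 < S p := hΔpos p hpΔ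
        have hmem : bnd (F, p) ∈ Bset := by
          apply Finset.mem_insert_of_mem
          apply Finset.mem_union_left
          exact Finset.mem_image_of_mem _ (Finset.mem_product.mpr
            ⟨Finset.mem_powerset.mpr hFsub, hpΔ⟩)
        have := hM _ hmem
        rw [hbnd] at this
        simpa using (div_lt_iff₀ hSpos).mp this
      · simp only [hpΔ, if_false]
        exact hlt F hF p (Finset.mem_sdiff.mpr ⟨hpL, hpΔ⟩) hpF
  · refine ⟨hΔL, fun i => M * s i, M * d, ?_, ?_⟩
    · intro p hp
      simp only [hp, if_true]
      exact (key p).symm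
    · intro p hpL hpΔ
      simp only [hpΔ, if_false]
      have hSneg : S p < 0 := hneg p hpL hpΔ
      have hmem : bnd2 p ∈ Bset := by
        apply Finset.mem_insert_of_mem
        apply Finset.mem_union_right
        exact Finset.mem_image_of_mem _ (Finset.mem_sdiff.mpr ⟨hpL, hpΔ⟩)
      have h2 := hM _ hmem
      rw [hbnd2] at h2
      have : M * S p < w₀ p := by
        have := (div_lt_iff_of_neg hSneg).mp h2
        linarith
      calc ∑ i, M * s i * (p i : ℝ) + M * d = M * S p := key p
        _ < w₀ p := this
end

section
/- The lattice points of the polytope Δ^1_1 × 2·Δ^n (the product of the unit segment and the second dilate of the standard n-simplex) can be partitioned into n+1 pairwise disjoint affinely independent subsets of cardinality n+2 each, namely the sets S_1,…,S_{n+1} given by: S_i = {e_1+e_{i+1}} ∪ {e_1+e_{i+1}+e_j : j = i+1,…,n+1} ∪ {e_{i+1}+e_j : j = 2,…,i+1} for 1 ≤ i ≤ n, and S_{n+1} = {0} ∪ {e_j : j = 1,…,n+1}, where e_1 is the coordinate of the segment factor and e_2,…,e_{n+1} the coordinates of the simplex factor. -/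
open Finset

/-- `dl n k` is the indicator vector of coordinate `k` in `ℤ^{n+1}`.
Coordinate `0` corresponds to the segment factor (`e₁` in the paper) and
coordinates `1, …, n` to the simplex factor (`e₂, …, e_{n+1}` in the paper). -/
def dl (n k : ℕ) : Fin (n + 1) → ℤ := fun l => if (l : ℕ) = k then 1 else 0

/-- The sets `S_1, …, S_{n+1}` (indexed by `i = 1, …, n+1`). -/
def Spart (n i : ℕ) : Set (Fin (n + 1) → ℤ) :=
  if i ≤ n then
    {dl n 0 + dl n i} ∪
      {x | ∃ j, i ≤ j ∧ j ≤ n ∧ x = dl n 0 + dl n i + dl n j} ∪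
      {x | ∃ j, 1 ≤ j ∧ j ≤ i ∧ x = dl n i + dl n j}
  else {0} ∪ {x | ∃ k ≤ n, x = dl n k}

/-- The lattice points of `Δ¹ × 2·Δⁿ`. -/
def LatticePts (n : ℕ) : Set (Fin (n + 1) → ℤ) :=
  {x | (∀ l, 0 ≤ x l) ∧ x 0 ≤ 1 ∧ ∑ l ∈ Finset.univ.erase 0, x l ≤ 2}

lemma dl_eq (n k : ℕ) (hk : k < n + 1) :
    dl n k = fun l => if l = (⟨k, hk⟩ : Fin (n+1)) then 1 else 0 := by
  funext l; simp [dl, Fin.ext_iff]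

lemma sum_erase_dl (n k : ℕ) (hk : k ≤ n) :
    ∑ l ∈ univ.erase (0 : Fin (n+1)), dl n k l = if k = 0 then 0 else 1 := by
  rw [dl_eq n k (by omega)]
  rw [Finset.sum_ite_eq' (univ.erase (0 : Fin (n+1))) (⟨k, by omega⟩ : Fin (n+1)) (fun _ => (1:ℤ))]
  by_cases h : k = 0
  · subst h; simp
  · rw [if_pos, if_neg h]
    simp [Fin.ext_iff, h]

lemma sum_dl (n k : ℕ) (hk : k ≤ n) : ∑ l, dl n k l = 1 := by
  rw [dl_eq n k (by omega)]
  rw [Finset.sum_ite_eq' univ (⟨k, by omega⟩ : Fin (n+1)) (fun _ => (1:ℤ))]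
  simp

lemma mem_Spart_le {n i : ℕ} (h : i ≤ n) {x : Fin (n+1) → ℤ} :
    x ∈ Spart n i ↔ x = dl n 0 + dl n i ∨
      (∃ j, i ≤ j ∧ j ≤ n ∧ x = dl n 0 + dl n i + dl n j) ∨
      (∃ j, 1 ≤ j ∧ j ≤ i ∧ x = dl n i + dl n j) := by
  rw [Spart, if_pos h]
  simp only [Set.union_assoc, Set.mem_union, Set.mem_singleton_iff, Set.mem_setOf_eq]

lemma mem_Spart_gt {n i : ℕ} (h : n < i) {x : Fin (n+1) → ℤ} :
    x ∈ Spart n i ↔ x = 0 ∨ ∃ k ≤ n, x = dl n k := by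
  rw [Spart, if_neg (by omega)]
  simp only [Set.mem_union, Set.mem_singleton_iff, Set.mem_setOf_eq]

lemma sum_erase_ind (n k : ℕ) (hk : k ≤ n) :
    ∑ l ∈ univ.erase (0 : Fin (n+1)), (if (l:ℕ) = k then (1:ℤ) else 0) = if k = 0 then 0 else 1 :=
  sum_erase_dl n k hk

-- invariants
lemma Spart_inv {n i : ℕ} (h1 : 1 ≤ i) (h2 : i ≤ n) {x : Fin (n+1) → ℤ} (hx : x ∈ Spart n i) :
    (∀ m : Fin (n+1), (m : ℕ) = i → 1 ≤ x m) ∧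
      ((x 0 = 1 ∧ ∀ m : Fin (n+1), 1 ≤ (m:ℕ) → (m:ℕ) < i → x m = 0) ∨
       (x 0 = 0 ∧ ∀ m : Fin (n+1), i < (m:ℕ) → x m = 0)) := by
  rw [mem_Spart_le h2] at hx
  rcases hx with h | ⟨j, hj1, hj2, h⟩ | ⟨j, hj1, hj2, h⟩ <;> subst h
  · constructor
    · intro m hm; simp only [Pi.add_apply, dl]; split_ifs <;> omega
    · left
      refine ⟨?_, fun m hm1 hm2 => ?_⟩ <;> simp only [Pi.add_apply, dl, Fin.val_zero] <;>
        split_ifs <;> omega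
  · constructor
    · intro m hm; simp only [Pi.add_apply, dl]; split_ifs <;> omega
    · left
      refine ⟨?_, fun m hm1 hm2 => ?_⟩ <;> simp only [Pi.add_apply, dl, Fin.val_zero] <;>
        split_ifs <;> omega
  · constructor
    · intro m hm; simp only [Pi.add_apply, dl]; split_ifs <;> omega
    · right
      refine ⟨?_, fun m hm2 => ?_⟩ <;> simp only [Pi.add_apply, dl, Fin.val_zero] <;>
        split_ifs <;> omega

lemma Spart_sum_ge {n i : ℕ} (h1 : 1 ≤ i) (h2 : i ≤ n) {x : Fin (n+1) → ℤ}
    (hx : x ∈ Spart n i) : 2 ≤ ∑ l, x l := by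
  rw [mem_Spart_le h2] at hx
  rcases hx with h | ⟨j, hj1, hj2, h⟩ | ⟨j, hj1, hj2, h⟩ <;> subst h <;>
    simp only [Pi.add_apply, Finset.sum_add_distrib] <;>
    rw [sum_dl n _ (by omega), sum_dl n _ (by omega)] <;> try rw [sum_dl n _ (by omega)]
  all_goals omega

lemma Spart_sum_le {n i : ℕ} (h2 : n < i) {x : Fin (n+1) → ℤ}
    (hx : x ∈ Spart n i) : ∑ l, x l ≤ 1 := by
  rw [mem_Spart_gt h2] at hx
  rcases hx with h | ⟨k, hk, h⟩ <;> subst h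
  · simp
  · rw [sum_dl n k hk]

lemma Spart_subset {n i : ℕ} (h1 : 1 ≤ i) (h2 : i ≤ n + 1) : Spart n i ⊆ LatticePts n := by
  intro x hx
  by_cases hi : i ≤ n
  · rw [mem_Spart_le hi] at hx
    rcases hx with h | ⟨j, hj1, hj2, h⟩ | ⟨j, hj1, hj2, h⟩ <;> subst h <;>
      refine ⟨fun l => ?_, ?_, ?_⟩ <;>
      simp only [Pi.add_apply, dl, Fin.val_zero, Finset.sum_add_distrib]
    · split_ifs <;> omega
    · split_ifs <;> omega
    · rw [sum_erase_ind n 0 (by omega), sum_erase_ind n i (by omega)]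
      split_ifs <;> omega
    · split_ifs <;> omega
    · split_ifs <;> omega
    · rw [sum_erase_ind n 0 (by omega), sum_erase_ind n i (by omega), sum_erase_ind n j (by omega)]
      split_ifs <;> omega
    · split_ifs <;> omega
    · split_ifs <;> omega
    · rw [sum_erase_ind n i (by omega), sum_erase_ind n j (by omega)]
      split_ifs <;> omega
  · rw [mem_Spart_gt (by omega)] at hx
    rcases hx with h | ⟨k, hk, h⟩ <;> subst h
    · exact ⟨fun l => le_refl 0, by norm_num, by simp⟩
    · refine ⟨fun l => ?_, ?_, ?_⟩ <;> simp only [dl, Fin.val_zero]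
      · split_ifs <;> omega
      · split_ifs <;> omega
      · rw [sum_erase_ind n k hk]; split_ifs <;> omega

lemma class_one {n : ℕ} {x : Fin (n+1) → ℤ} (h0 : ∀ l, 0 ≤ x l)
    (hs : ∑ l ∈ univ.erase 0, x l = 1) :
    ∃ a : Fin (n+1), a ≠ 0 ∧ ∀ l : Fin (n+1), l ≠ 0 → x l = if l = a then 1 else 0 := by
  have hex : ∃ a ∈ univ.erase (0 : Fin (n+1)), 1 ≤ x a := by
    by_contra hc
    push_neg at hc
    have hle : ∑ l ∈ univ.erase (0 : Fin (n+1)), x l ≤ 0 :=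
      Finset.sum_nonpos fun l hl => by have := hc l hl; omega
    omega
  obtain ⟨a, ha, hxa⟩ := hex
  refine ⟨a, (Finset.mem_erase.1 ha).1, ?_⟩
  have hsplit : x a + ∑ l ∈ (univ.erase (0 : Fin (n+1))).erase a, x l = 1 := by
    rw [Finset.add_sum_erase _ _ ha]; exact hs
  have hnn : 0 ≤ ∑ l ∈ (univ.erase (0 : Fin (n+1))).erase a, x l :=
    Finset.sum_nonneg fun l _ => h0 l
  have hxa1 : x a = 1 := by omega
  have hzero : ∀ l ∈ (univ.erase (0 : Fin (n+1))).erase a, x l = 0 :=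
    (Finset.sum_eq_zero_iff_of_nonneg fun l _ => h0 l).1 (by omega)
  intro l hl
  by_cases hla : l = a
  · subst hla; simp [hxa1]
  · rw [if_neg hla]
    exact hzero l (by simp [Finset.mem_erase, hla, hl])

lemma class_two {n : ℕ} {x : Fin (n+1) → ℤ} (h0 : ∀ l, 0 ≤ x l)
    (hs : ∑ l ∈ univ.erase 0, x l = 2) :
    ∃ a b : Fin (n+1), a ≠ 0 ∧ b ≠ 0 ∧
      ∀ l : Fin (n+1), l ≠ 0 → x l = (if l = a then 1 else 0) + (if l = b then 1 else 0) := by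
  have hex : ∃ a ∈ univ.erase (0 : Fin (n+1)), 1 ≤ x a := by
    by_contra hc
    push_neg at hc
    have hle : ∑ l ∈ univ.erase (0 : Fin (n+1)), x l ≤ 0 :=
      Finset.sum_nonpos fun l hl => by have := hc l hl; omega
    omega
  obtain ⟨a, ha, hxa⟩ := hex
  have ha0 : a ≠ 0 := (Finset.mem_erase.1 ha).1
  set y : Fin (n+1) → ℤ := fun l => x l - if l = a then 1 else 0 with hy
  have hy0 : ∀ l, 0 ≤ y l := by
    intro l
    simp only [hy]
    split_ifs with h
    · subst h; omega
    · have := h0 l; omega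
  have hys : ∑ l ∈ univ.erase 0, y l = 1 := by
    simp only [hy]
    rw [Finset.sum_sub_distrib, hs,
      Finset.sum_ite_eq' (univ.erase (0 : Fin (n+1))) a (fun _ => (1:ℤ)), if_pos ha]
    norm_num
  obtain ⟨b, hb0, hb⟩ := class_one hy0 hys
  refine ⟨a, b, ha0, hb0, fun l hl => ?_⟩
  have := hb l hl
  simp only [hy] at this
  split_ifs at this ⊢ <;> omega

lemma lattice_mem {n : ℕ} (hn : 1 ≤ n) {x : Fin (n+1) → ℤ} (hx : x ∈ LatticePts n) :
    ∃ i, 1 ≤ i ∧ i ≤ n + 1 ∧ x ∈ Spart n i := by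
  obtain ⟨h0, h01, hs2⟩ := hx
  have hx0 : x 0 = 0 ∨ x 0 = 1 := by have := h0 0; omega
  have hsnn : 0 ≤ ∑ l ∈ univ.erase (0 : Fin (n+1)), x l :=
    Finset.sum_nonneg fun l _ => h0 l
  have hcase : ∑ l ∈ univ.erase (0 : Fin (n+1)), x l = 0 ∨
      ∑ l ∈ univ.erase (0 : Fin (n+1)), x l = 1 ∨
      ∑ l ∈ univ.erase (0 : Fin (n+1)), x l = 2 := by omega
  rcases hcase with hc | hc | hc
  · -- sum 0
    have hz : ∀ l : Fin (n+1), l ≠ 0 → x l = 0 := by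
      intro l hl
      exact (Finset.sum_eq_zero_iff_of_nonneg fun l _ => h0 l).1 hc l (by simp [hl])
    refine ⟨n+1, by omega, by omega, ?_⟩
    rw [mem_Spart_gt (by omega)]
    rcases hx0 with h | h
    · left
      funext l
      by_cases hl : l = 0
      · subst hl; simpa using h
      · simpa using hz l hl
    · right
      refine ⟨0, by omega, ?_⟩
      funext l
      simp only [dl]
      by_cases hl : l = 0
      · subst hl; simp only [Fin.val_zero]; split_ifs <;> omega
      · have hl' : (l:ℕ) ≠ 0 := fun h => hl (Fin.ext (by rw [h, Fin.val_zero]))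
        have := hz l hl
        split_ifs <;> omega
  · -- sum 1
    obtain ⟨a, ha0, ha⟩ := class_one h0 hc
    have hav : 1 ≤ (a:ℕ) := by
      rcases Nat.eq_zero_or_pos (a:ℕ) with h | h
      · exact absurd (Fin.ext h : a = 0) ha0
      · omega
    have ha' : ∀ l : Fin (n+1), l ≠ 0 → x l = if (l:ℕ) = (a:ℕ) then 1 else 0 := by
      intro l hl; rw [ha l hl]; simp [Fin.ext_iff]
    rcases hx0 with h | h
    · refine ⟨n+1, by omega, by omega, ?_⟩
      rw [mem_Spart_gt (by omega)]
      right
      refine ⟨(a:ℕ), by omega, ?_⟩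
      funext l
      simp only [dl]
      by_cases hl : l = 0
      · subst hl; simp only [Fin.val_zero]; split_ifs <;> omega
      · rw [ha' l hl]
    · refine ⟨(a:ℕ), hav, by omega, ?_⟩
      rw [mem_Spart_le (by omega)]
      left
      funext l
      simp only [Pi.add_apply, dl]
      by_cases hl : l = 0
      · subst hl; simp only [Fin.val_zero]; split_ifs <;> omega
      · have hl' : (l:ℕ) ≠ 0 := fun h => hl (Fin.ext (by rw [h, Fin.val_zero]))
        rw [ha' l hl]
        split_ifs <;> omega
  · -- sum 2
    obtain ⟨a, b, ha0, hb0, hab⟩ := class_two h0 hc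
    obtain ⟨a, b, ha0, hb0, hord, hab⟩ :
        ∃ a b : Fin (n+1), a ≠ 0 ∧ b ≠ 0 ∧ (a:ℕ) ≤ (b:ℕ) ∧
          ∀ l : Fin (n+1), l ≠ 0 → x l = (if l = a then 1 else 0) + (if l = b then 1 else 0) := by
      rcases le_total (a:ℕ) (b:ℕ) with h | h
      · exact ⟨a, b, ha0, hb0, h, hab⟩
      · exact ⟨b, a, hb0, ha0, h, fun l hl => by rw [hab l hl]; ring⟩
    have hav : 1 ≤ (a:ℕ) := by
      rcases Nat.eq_zero_or_pos (a:ℕ) with h | h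
      · exact absurd (Fin.ext h : a = 0) ha0
      · omega
    have hbv : 1 ≤ (b:ℕ) := by
      rcases Nat.eq_zero_or_pos (b:ℕ) with h | h
      · exact absurd (Fin.ext h : b = 0) hb0
      · omega
    have hbn : (b:ℕ) ≤ n := by have := b.isLt; omega
    have hab' : ∀ l : Fin (n+1), l ≠ 0 →
        x l = (if (l:ℕ) = (a:ℕ) then 1 else 0) + (if (l:ℕ) = (b:ℕ) then 1 else 0) := by
      intro l hl; rw [hab l hl]; simp [Fin.ext_iff]
    rcases hx0 with h | h
    · refine ⟨(b:ℕ), hbv, by omega, ?_⟩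
      rw [mem_Spart_le hbn]
      right; right
      refine ⟨(a:ℕ), hav, hord, ?_⟩
      funext l
      simp only [Pi.add_apply, dl]
      by_cases hl : l = 0
      · subst hl; simp only [Fin.val_zero]; split_ifs <;> omega
      · have hl' : (l:ℕ) ≠ 0 := fun h => hl (Fin.ext (by rw [h, Fin.val_zero]))
        rw [hab' l hl]
        split_ifs <;> omega
    · refine ⟨(a:ℕ), hav, by omega, ?_⟩
      rw [mem_Spart_le (by omega)]
      right; left
      refine ⟨(b:ℕ), hord, hbn, ?_⟩
      funext l
      simp only [Pi.add_apply, dl]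
      by_cases hl : l = 0
      · subst hl; simp only [Fin.val_zero]; split_ifs <;> omega
      · have hl' : (l:ℕ) ≠ 0 := fun h => hl (Fin.ext (by rw [h, Fin.val_zero]))
        rw [hab' l hl]
        split_ifs <;> omega

def fI (n i : ℕ) : Fin (n+2) → (Fin (n+1) → ℤ) := fun k =>
  if (k:ℕ) = 0 then dl n 0 + dl n i
  else if (k:ℕ) ≤ i then dl n i + dl n (k:ℕ)
  else dl n 0 + dl n i + dl n ((k:ℕ) - 1)

def fL (n : ℕ) : Fin (n+2) → (Fin (n+1) → ℤ) := fun k =>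
  if (k:ℕ) = 0 then 0 else dl n ((k:ℕ) - 1)

lemma Spart_eq_range_le {n i : ℕ} (h1 : 1 ≤ i) (h2 : i ≤ n) :
    Spart n i = Set.range (fI n i) := by
  ext x
  rw [mem_Spart_le h2, Set.mem_range]
  constructor
  · rintro (h | ⟨j, hj1, hj2, h⟩ | ⟨j, hj1, hj2, h⟩)
    · exact ⟨⟨0, by omega⟩, by simp [fI, h]⟩
    · refine ⟨⟨j + 1, by omega⟩, ?_⟩
      have hni : ¬(j + 1 ≤ i) := by omega
      simp [fI, hni, h]
    · refine ⟨⟨j, by omega⟩, ?_⟩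
      have h0 : ¬(j = 0) := by omega
      simp [fI, h0, hj2, h]
  · rintro ⟨k, rfl⟩
    by_cases hk0 : (k:ℕ) = 0
    · left; simp only [fI]; rw [if_pos hk0]
    · by_cases hki : (k:ℕ) ≤ i
      · right; right
        refine ⟨(k:ℕ), by omega, hki, ?_⟩
        simp only [fI]
        rw [if_neg hk0, if_pos hki]
      · right; left
        refine ⟨(k:ℕ) - 1, by omega, by have := k.isLt; omega, ?_⟩
        simp only [fI]
        rw [if_neg hk0, if_neg hki]

lemma Spart_eq_range_gt (n : ℕ) : Spart n (n+1) = Set.range (fL n) := by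
  ext x
  rw [mem_Spart_gt (by omega), Set.mem_range]
  constructor
  · rintro (h | ⟨k, hk, h⟩)
    · exact ⟨⟨0, by omega⟩, by simp [fL, h]⟩
    · refine ⟨⟨k + 1, by omega⟩, ?_⟩
      simp only [fL]
      rw [if_neg (by simp)]
      simpa using h.symm
  · rintro ⟨k, rfl⟩
    by_cases hk0 : (k:ℕ) = 0
    · left; simp only [fL]; rw [if_pos hk0]
    · right
      refine ⟨(k:ℕ) - 1, by have := k.isLt; omega, ?_⟩
      simp only [fL]
      rw [if_neg hk0]

def gI (n i : ℕ) : Fin (n+2) → (Fin (n+1) → ℚ) := fun k l => ((fI n i k l : ℤ) : ℚ)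
def gL (n : ℕ) : Fin (n+2) → (Fin (n+1) → ℚ) := fun k l => ((fL n k l : ℤ) : ℚ)

lemma gI_apply (n i : ℕ) (k : Fin (n+2)) (l : Fin (n+1)) :
    gI n i k l =
      if (k:ℕ) = 0 then (if (l:ℕ) = 0 then 1 else 0) + (if (l:ℕ) = i then 1 else 0)
      else if (k:ℕ) ≤ i then (if (l:ℕ) = i then 1 else 0) + (if (l:ℕ) = (k:ℕ) then 1 else 0)
      else (if (l:ℕ) = 0 then 1 else 0) + (if (l:ℕ) = i then 1 else 0)
        + (if (l:ℕ) = (k:ℕ) - 1 then 1 else 0) := by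
  simp only [gI, fI]
  split_ifs <;> simp_all [dl] <;> norm_num

lemma gL_apply (n : ℕ) (k : Fin (n+2)) (l : Fin (n+1)) :
    gL n k l = if (k:ℕ) = 0 then 0 else (if (l:ℕ) = (k:ℕ) - 1 then 1 else 0) := by
  simp only [gL, fL]
  split_ifs <;> simp_all [dl] <;> norm_num

lemma sum_ind {m : ℕ} (w : Fin m → ℚ) (c : ℕ) (hc : c < m) :
    (∑ k : Fin m, w k * (if (k:ℕ) = c then 1 else 0)) = w ⟨c, hc⟩ := by
  have key : ∀ k : Fin m, w k * (if (k:ℕ) = c then 1 else 0)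
      = if k = ⟨c, hc⟩ then w k else 0 := by
    intro k
    by_cases h : (k:ℕ) = c
    · rw [if_pos h, if_pos (Fin.ext h), mul_one]
    · rw [if_neg h, if_neg fun hh => h (congrArg Fin.val hh), mul_zero]
  rw [Finset.sum_congr rfl fun k _ => key k]
  simp

lemma aff_of_sums {N M : ℕ} {p : Fin M → (Fin N → ℚ)}
    (h : ∀ w : Fin M → ℚ, ∑ k, w k = 0 → (∀ l, ∑ k, w k * p k l = 0) → ∀ k, w k = 0) :
    AffineIndependent ℚ p := by
  rw [affineIndependent_iff_of_fintype]
  intro w hw hv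
  refine h w hw fun l => ?_
  rw [Finset.univ.weightedVSub_eq_linear_combination hw] at hv
  have := congrFun hv l
  simpa [Finset.sum_apply] using this

lemma gI_coord_lt {n i m : ℕ} (h1 : 1 ≤ m) (h2 : m < i) (hm : m < n+1) (k : Fin (n+2)) :
    gI n i k ⟨m, hm⟩ = if (k:ℕ) = m then 1 else 0 := by
  rw [gI_apply]
  have hv : ((⟨m, hm⟩ : Fin (n+1)) : ℕ) = m := rfl
  rw [hv]
  split_ifs <;> first | (exfalso; omega) | norm_num

lemma gI_coord_gt {n i m : ℕ} (h1 : i < m) (hm : m < n+1) (k : Fin (n+2)) :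
    gI n i k ⟨m, hm⟩ = if (k:ℕ) = m + 1 then 1 else 0 := by
  rw [gI_apply]
  have hv : ((⟨m, hm⟩ : Fin (n+1)) : ℕ) = m := rfl
  rw [hv]
  split_ifs <;> first | (exfalso; omega) | norm_num

lemma gI_coord_i {n i : ℕ} (h1 : 1 ≤ i) (hm : i < n+1) (k : Fin (n+2)) :
    gI n i k ⟨i, hm⟩ = 1 + (if (k:ℕ) = i then 1 else 0) + (if (k:ℕ) = i + 1 then 1 else 0) := by
  rw [gI_apply]
  have hv : ((⟨i, hm⟩ : Fin (n+1)) : ℕ) = i := rfl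
  rw [hv]
  split_ifs <;> first | (exfalso; omega) | norm_num

lemma gI_coord_0 {n i : ℕ} (h1 : 1 ≤ i) (hm : 0 < n+1) (k : Fin (n+2)) :
    gI n i k ⟨0, hm⟩ = 1 - (if 1 ≤ (k:ℕ) ∧ (k:ℕ) ≤ i then 1 else 0) := by
  rw [gI_apply]
  have hv : ((⟨0, hm⟩ : Fin (n+1)) : ℕ) = 0 := rfl
  rw [hv]
  split_ifs <;> first | (exfalso; omega) | norm_num

lemma gI_aff {n i : ℕ} (h1 : 1 ≤ i) (h2 : i ≤ n) : AffineIndependent ℚ (gI n i) := by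
  apply aff_of_sums
  intro w hw hl
  -- w k = 0 for 1 ≤ k < i
  have hlt : ∀ k : Fin (n+2), 1 ≤ (k:ℕ) → (k:ℕ) < i → w k = 0 := by
    intro k hk1 hk2
    have hm : (k:ℕ) < n + 1 := by omega
    have hc := hl ⟨(k:ℕ), hm⟩
    rw [Finset.sum_congr rfl fun k' _ => by rw [gI_coord_lt hk1 hk2 hm k']] at hc
    rw [sum_ind w (k:ℕ) (by omega)] at hc
    simpa using hc
  -- w k = 0 for i + 2 ≤ k
  have hgt : ∀ k : Fin (n+2), i + 2 ≤ (k:ℕ) → w k = 0 := by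
    intro k hk1
    have hkn : (k:ℕ) < n + 2 := k.isLt
    have hm : (k:ℕ) - 1 < n + 1 := by omega
    have hc := hl ⟨(k:ℕ) - 1, hm⟩
    rw [Finset.sum_congr rfl fun k' _ => by
      rw [gI_coord_gt (show i < (k:ℕ) - 1 by omega) hm k']] at hc
    rw [sum_ind w ((k:ℕ) - 1 + 1) (by omega)] at hc
    rwa [show (⟨(k:ℕ) - 1 + 1, by omega⟩ : Fin (n+2)) = k from Fin.ext (by simp only [Fin.val_mk]; omega)] at hc
  -- w ⟨i⟩ = 0 from coordinate 0
  have hii : i < n + 2 := by omega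
  have hi0 : w ⟨i, hii⟩ = 0 := by
    have hc := hl ⟨0, by omega⟩
    rw [Finset.sum_congr rfl fun k' _ => by rw [gI_coord_0 h1 (by omega) k']] at hc
    have hsplit : ∑ k : Fin (n+2), w k * (1 - (if 1 ≤ (k:ℕ) ∧ (k:ℕ) ≤ i then 1 else 0))
        = ∑ k : Fin (n+2), w k
          - ∑ k : Fin (n+2), (if 1 ≤ (k:ℕ) ∧ (k:ℕ) ≤ i then w k else 0) := by
      rw [← Finset.sum_sub_distrib]
      refine Finset.sum_congr rfl fun k _ => ?_
      split_ifs <;> ring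
    rw [hsplit, hw] at hc
    rw [← Finset.sum_filter] at hc
    have hfil : ∑ k ∈ univ.filter (fun k : Fin (n+2) => 1 ≤ (k:ℕ) ∧ (k:ℕ) ≤ i), w k
        = w ⟨i, hii⟩ := by
      apply Finset.sum_eq_single_of_mem
      · simp only [Finset.mem_filter, Finset.mem_univ, true_and]
        exact ⟨h1, le_refl i⟩
      · intro b hb hbne
        simp only [Finset.mem_filter, Finset.mem_univ, true_and] at hb
        refine hlt b hb.1 ?_
        have : (b:ℕ) ≠ i := fun h => hbne (Fin.ext h)
        omega
    rw [hfil] at hc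
    linarith
  -- w ⟨i+1⟩ = 0 from coordinate i
  have hi1 : w ⟨i + 1, by omega⟩ = 0 := by
    have hc := hl ⟨i, by omega⟩
    rw [Finset.sum_congr rfl fun k' _ => by rw [gI_coord_i h1 (by omega) k']] at hc
    have hsplit : ∑ k : Fin (n+2), w k *
        (1 + (if (k:ℕ) = i then 1 else 0) + (if (k:ℕ) = i + 1 then 1 else 0))
        = ∑ k : Fin (n+2), w k
          + ∑ k : Fin (n+2), w k * (if (k:ℕ) = i then 1 else 0)
          + ∑ k : Fin (n+2), w k * (if (k:ℕ) = i + 1 then 1 else 0) := by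
      rw [← Finset.sum_add_distrib, ← Finset.sum_add_distrib]
      refine Finset.sum_congr rfl fun k _ => ?_
      ring
    rw [hsplit, hw, sum_ind w i hii, sum_ind w (i+1) (by omega), hi0] at hc
    linarith
  -- w 0 = 0
  intro k
  by_cases hk0 : (k:ℕ) = 0
  · have hone : ∑ k' : Fin (n+2), w k' = w k := by
      apply Finset.sum_eq_single_of_mem k (Finset.mem_univ k)
      intro b _ hbne
      have hb0 : (b:ℕ) ≠ 0 := fun h => hbne (Fin.ext (by rw [h, hk0]))
      have hbn : (b:ℕ) < n + 2 := b.isLt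
      rcases Nat.lt_or_ge (b:ℕ) i with h | h
      · exact hlt b (by omega) h
      · rcases Nat.eq_or_lt_of_le h with h' | h'
        · rw [show b = (⟨i, hii⟩ : Fin (n+2)) from Fin.ext (by simp only [Fin.val_mk]; omega)]; exact hi0
        · rcases Nat.eq_or_lt_of_le h' with h'' | h''
          · rw [show b = (⟨i + 1, by omega⟩ : Fin (n+2)) from Fin.ext (by simp only [Fin.val_mk]; omega)]; exact hi1
          · exact hgt b (by omega)
    rw [hone] at hw
    exact hw
  · have hkn : (k:ℕ) < n + 2 := k.isLt
    rcases Nat.lt_or_ge (k:ℕ) i with h | h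
    · exact hlt k (by omega) h
    · rcases Nat.eq_or_lt_of_le h with h' | h'
      · rw [show k = (⟨i, hii⟩ : Fin (n+2)) from Fin.ext (by simp only [Fin.val_mk]; omega)]; exact hi0
      · rcases Nat.eq_or_lt_of_le h' with h'' | h''
        · rw [show k = (⟨i + 1, by omega⟩ : Fin (n+2)) from Fin.ext (by simp only [Fin.val_mk]; omega)]; exact hi1
        · exact hgt k (by omega)

lemma gL_aff (n : ℕ) : AffineIndependent ℚ (gL n) := by
  apply aff_of_sums
  intro w hw hl
  have hne : ∀ k : Fin (n+2), (k:ℕ) ≠ 0 → w k = 0 := by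
    intro k hk0
    have hkn : (k:ℕ) < n + 2 := k.isLt
    have hm : (k:ℕ) - 1 < n + 1 := by omega
    have hc := hl ⟨(k:ℕ) - 1, hm⟩
    have he : ∀ k' : Fin (n+2), gL n k' ⟨(k:ℕ) - 1, hm⟩
        = if (k':ℕ) = (k:ℕ) - 1 + 1 then 1 else 0 := by
      intro k'
      rw [gL_apply]
      have hv : ((⟨(k:ℕ) - 1, hm⟩ : Fin (n+1)) : ℕ) = (k:ℕ) - 1 := rfl
      rw [hv]
      split_ifs <;> first | (exfalso; omega) | norm_num
    rw [Finset.sum_congr rfl fun k' _ => by rw [he k']] at hc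
    rw [sum_ind w ((k:ℕ) - 1 + 1) (by omega)] at hc
    rwa [show (⟨(k:ℕ) - 1 + 1, by omega⟩ : Fin (n+2)) = k from Fin.ext (by simp only [Fin.val_mk]; omega)] at hc
  intro k
  by_cases hk0 : (k:ℕ) = 0
  · have hone : ∑ k' : Fin (n+2), w k' = w k := by
      apply Finset.sum_eq_single_of_mem k (Finset.mem_univ k)
      intro b _ hbne
      exact hne b fun h => hbne (Fin.ext (by rw [h, hk0]))
    rw [hone] at hw
    exact hw
  · exact hne k hk0

-- generic transfer lemma
lemma aff_range {N M : ℕ} (f : Fin M → (Fin N → ℤ))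
    (hga : AffineIndependent ℚ (fun k l => ((f k l : ℤ) : ℚ))) :
    AffineIndependent ℚ (fun p : Set.range f => fun l => ((p : Fin N → ℤ) l : ℚ)) := by
  set g : Fin M → (Fin N → ℚ) := fun k l => ((f k l : ℤ) : ℚ) with hg
  have hr := hga.range
  have he : ∀ p : Set.range f, (fun l => ((p : Fin N → ℤ) l : ℚ)) ∈ Set.range g := by
    rintro ⟨-, k, rfl⟩
    exact ⟨k, rfl⟩
  have hei : Function.Injective (fun p : Set.range f => (⟨_, he p⟩ : Set.range g)) := by
    rintro p q h
    have h' : (fun l => ((p : Fin N → ℤ) l : ℚ)) = fun l => ((q : Fin N → ℤ) l : ℚ) :=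
      congrArg Subtype.val h
    apply Subtype.ext
    funext l
    exact_mod_cast congrFun h' l
  exact hr.comp_embedding ⟨_, hei⟩

lemma f_inj {N M : ℕ} (f : Fin M → (Fin N → ℤ))
    (hga : AffineIndependent ℚ (fun k l => ((f k l : ℤ) : ℚ))) :
    Function.Injective f := by
  intro a b h
  exact hga.injective (show (fun l => ((f a l : ℤ) : ℚ)) = fun l => ((f b l : ℤ) : ℚ) by rw [h])

lemma range_ncard {N M : ℕ} (f : Fin M → (Fin N → ℤ)) (hf : Function.Injective f) :
    (Set.range f).ncard = M := by
  rw [← Set.image_univ, Set.ncard_image_of_injective _ hf, Set.ncard_univ]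
  simp


lemma Spart_disj_aux {n i j : ℕ} {x : Fin (n+1) → ℤ} (h1 : 1 ≤ i) (hij : i < j) (hj : j ≤ n)
    (hxi : x ∈ Spart n i) (hxj : x ∈ Spart n j) : False := by
  have hilt : i < n + 1 := by omega
  have hjlt : j < n + 1 := by omega
  obtain ⟨hi1, hcasei⟩ := Spart_inv h1 (by omega) hxi
  obtain ⟨hj1, hcasej⟩ := Spart_inv (by omega) hj hxj
  have hxi1 : 1 ≤ x ⟨i, hilt⟩ := hi1 ⟨i, hilt⟩ rfl
  have hxj1 : 1 ≤ x ⟨j, hjlt⟩ := hj1 ⟨j, hjlt⟩ rfl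
  rcases hcasei with ⟨h0i, hzi⟩ | ⟨h0i, hzi⟩ <;> rcases hcasej with ⟨h0j, hzj⟩ | ⟨h0j, hzj⟩
  · have := hzj ⟨i, hilt⟩ (by exact h1) (by exact hij)
    omega
  · omega
  · omega
  · have := hzi ⟨j, hjlt⟩ (by exact hij)
    omega


/-- The lattice points of `Δ¹ × 2·Δⁿ` are partitioned into the `n+1` pairwise disjoint
sets `S_1, …, S_{n+1}`, each of cardinality `n+2` and affinely independent. -/
theorem stmt_14 (n : ℕ) (hn : 1 ≤ n) :
    (∀ i j, 1 ≤ i → i ≤ n + 1 → 1 ≤ j → j ≤ n + 1 → i ≠ j →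
      Disjoint (Spart n i) (Spart n j)) ∧
    (⋃ i ∈ Set.Icc 1 (n + 1), Spart n i) = LatticePts n ∧
    (∀ i, 1 ≤ i → i ≤ n + 1 → (Spart n i).ncard = n + 2) ∧
    (∀ i, 1 ≤ i → i ≤ n + 1 →
      AffineIndependent ℚ
        (fun p : Spart n i => fun l => ((p : Fin (n + 1) → ℤ) l : ℚ))) := by
  refine ⟨?_, ?_, ?_, ?_⟩
  · -- disjointness
    intro i j hi1 hi2 hj1 hj2 hij
    rw [Set.disjoint_left]
    intro x hxi hxj
    by_cases hi : i ≤ n <;> by_cases hj : j ≤ n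
    · rcases lt_or_gt_of_ne hij with h | h
      · exact Spart_disj_aux hi1 h hj hxi hxj
      · exact Spart_disj_aux hj1 h hi hxj hxi
    · have hj' : j = n + 1 := by omega
      subst hj'
      have hs1 := Spart_sum_ge hi1 hi hxi
      have hs2 := Spart_sum_le (by omega) hxj
      omega
    · have hi' : i = n + 1 := by omega
      subst hi'
      have hs1 := Spart_sum_ge hj1 hj hxj
      have hs2 := Spart_sum_le (by omega) hxi
      omega
    · omega
  · -- union
    ext x
    simp only [Set.mem_iUnion, Set.mem_Icc, exists_prop]
    constructor
    · rintro ⟨i, ⟨hi1, hi2⟩, hx⟩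
      exact Spart_subset hi1 hi2 hx
    · intro hx
      obtain ⟨i, h1, h2, hmem⟩ := lattice_mem hn hx
      exact ⟨i, ⟨h1, h2⟩, hmem⟩
  · -- cardinality
    intro i h1 h2
    by_cases hi : i ≤ n
    · rw [Spart_eq_range_le h1 hi]
      exact range_ncard _ (f_inj _ (gI_aff h1 hi))
    · have hi' : i = n + 1 := by omega
      subst hi'
      rw [Spart_eq_range_gt n]
      exact range_ncard _ (f_inj _ (gL_aff n))
  · -- affine independence
    intro i h1 h2
    by_cases hi : i ≤ n
    · rw [Spart_eq_range_le h1 hi]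
      exact aff_range _ (gI_aff h1 hi)
    · have hi' : i = n + 1 := by omega
      subst hi'
      rw [Spart_eq_range_gt n]
      exact aff_range _ (gL_aff n)
end
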